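/- For every coherent system c on X over R, the map ψ : I(X,R) → I(X,R) defined by (ψ f) x y = c x y · f x y for x < y, (ψ f) x x = f x x, and (ψ f) x y = 0 for all other pairs, is a ring automorphism of I(X,R), and it is multiplicative. -/

import Mathlib

/-- A ring automorphism of the incidence algebra is *multiplicative* if it fixes every
function supported on the diagonal and maps functions vanishing on the diagonal to
functions vanishing on the diagonal. -/
def IsMultAut {X R : Type*} [Preorder X] [LocallyFiniteOrder X] [DecidableEq X] [Ring R]
    (φ : RingAut (IncidenceAlgebra R X)) : Prop :=
  (∀ f : IncidenceAlgebra R X, (∀ x y : X, x ≠ y → f x y = 0) → φ f = f) ∧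
  (∀ f : IncidenceAlgebra R X, (∀ x : X, f x x = 0) → ∀ x : X, (φ f) x x = 0)

/-- Every coherent system of invertible central elements on a finite poset
induces a multiplicative ring automorphism of the incidence algebra
(Proposition 3.3, part 1, converse direction). -/
theorem coherent_system_gives_mult_aut {X R : Type*} [PartialOrder X] [Fintype X]
    [LocallyFiniteOrder X] [DecidableEq X] [Ring R]
    (c : X → X → R)
    (hc : ∀ x y : X, x < y → c x y ∈ Set.center R ∧ IsUnit (c x y))
    (hcoh : ∀ x z y : X, x < z → z < y → c x y = c x z * c z y) :
    ∃ ψ : RingAut (IncidenceAlgebra R X),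
      (∀ (f : IncidenceAlgebra R X) (x y : X), x < y → (ψ f) x y = c x y * f x y) ∧
      (∀ (f : IncidenceAlgebra R X) (x : X), (ψ f) x x = f x x) ∧
      (∀ (f : IncidenceAlgebra R X) (x y : X), ¬x < y → x ≠ y → (ψ f) x y = 0) ∧
      IsMultAut ψ := by
  classical
  set d : X → X → R := fun x y => if h : x < y then c x y else 1 with hd
  set e : X → X → R := fun x y => if h : x < y then ↑((hc x y h).2.unit)⁻¹ else 1 with he
  have hde : ∀ x y, d x y * e x y = 1 := by
    intro x y
    by_cases h : x < y
    · simp only [hd, he]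
      rw [dif_pos h, dif_pos h]
      exact (hc x y h).2.mul_val_inv
    · simp only [hd, he]
      rw [dif_neg h, dif_neg h, one_mul]
  have hed : ∀ x y, e x y * d x y = 1 := by
    intro x y
    by_cases h : x < y
    · simp only [hd, he]
      rw [dif_pos h, dif_pos h]
      exact (hc x y h).2.val_inv_mul
    · simp only [hd, he]
      rw [dif_neg h, dif_neg h, one_mul]
  have hdc : ∀ x y, d x y ∈ Set.center R := by
    intro x y
    by_cases h : x < y
    · simp only [hd]; rw [dif_pos h]; exact (hc x y h).1
    · simp only [hd]; rw [dif_neg h]; exact Set.one_mem_center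
  have hdcoh : ∀ x z y : X, x ≤ z → z ≤ y → d x y = d x z * d z y := by
    intro x z y hxz hzy
    rcases eq_or_lt_of_le hxz with rfl | hxz
    · simp [hd]
    rcases eq_or_lt_of_le hzy with rfl | hzy
    · simp [hd]
    simp only [hd, dif_pos hxz, dif_pos hzy, dif_pos (hxz.trans hzy)]
    exact hcoh x z y hxz hzy
  have hdiag : ∀ x, d x x = 1 := fun x => by simp [hd]
  -- the maps
  let F : IncidenceAlgebra R X → IncidenceAlgebra R X := fun f =>
    ⟨fun x y => d x y * f x y, fun x y h => by
      rw [IncidenceAlgebra.apply_eq_zero_of_not_le h, mul_zero]⟩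
  let G : IncidenceAlgebra R X → IncidenceAlgebra R X := fun f =>
    ⟨fun x y => e x y * f x y, fun x y h => by
      rw [IncidenceAlgebra.apply_eq_zero_of_not_le h, mul_zero]⟩
  have Fapp : ∀ f x y, F f x y = d x y * f x y := fun _ _ _ => rfl
  have Gapp : ∀ f x y, G f x y = e x y * f x y := fun _ _ _ => rfl
  have hmul : ∀ f g, F (f * g) = F f * F g := by
    intro f g
    ext x y hxy
    rw [Fapp, IncidenceAlgebra.mul_apply, IncidenceAlgebra.mul_apply, Finset.mul_sum]
    refine Finset.sum_congr rfl fun z hz => ?_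
    rw [Finset.mem_Icc] at hz
    rw [Fapp, Fapp, hdcoh x z y hz.1 hz.2]
    have hcomm : d z y * f x z = f x z * d z y :=
      ((Set.mem_center_iff.mp (hdc z y)).comm (f x z))
    rw [mul_assoc, mul_assoc, ← mul_assoc (d z y), hcomm, mul_assoc]
  let ψ : RingAut (IncidenceAlgebra R X) :=
    { toFun := F
      invFun := G
      left_inv := by
        intro f
        ext x y _
        rw [Gapp, Fapp, ← mul_assoc, hed, one_mul]
      right_inv := by
        intro f
        ext x y _
        rw [Fapp, Gapp, ← mul_assoc, hde, one_mul]
      map_mul' := hmul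
      map_add' := by
        intro f g
        ext x y _
        rw [Fapp, IncidenceAlgebra.add_apply, IncidenceAlgebra.add_apply, Fapp, Fapp, mul_add] }
  have hψapp : ∀ f x y, ψ f x y = d x y * f x y := fun _ _ _ => rfl
  refine ⟨ψ, ?_, ?_, ?_, ?_, ?_⟩
  · intro f x y h
    rw [hψapp, hd]; simp [dif_pos h]
  · intro f x
    rw [hψapp, hdiag, one_mul]
  · intro f x y h hne
    have : ¬ x ≤ y := fun hle => hne (by rcases eq_or_lt_of_le hle with rfl | h' <;> tauto)
    rw [hψapp, IncidenceAlgebra.apply_eq_zero_of_not_le this, mul_zero]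
  · intro f hf
    ext x y hxy
    rcases eq_or_lt_of_le hxy with rfl | h
    · rw [hψapp, hdiag, one_mul]
    · rw [hψapp, hf x y h.ne, mul_zero]
  · intro f hf x
    rw [hψapp, hdiag, one_mul, hf]
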